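/- The kernel of T is 2-dimensional as an 𝔽_p-vector space: dim_{𝔽_p} ker T = 2. (This is the dimension count of Theorem 4.4: the kernel of the Chern class map c₁ : NS(A)/pNS(A) → H¹(A, Ω¹_A) of the superspecial abelian surface A is 2-dimensional over 𝔽_p.) -/

import Mathlib

/-- Let `p` be an odd prime, `K` a field of characteristic `p` (with its unique
`ZMod p`-algebra structure, making `K` an `𝔽_p`-vector space), `q` an integer not divisible
by `p`, `a` an integer, and `s ∈ K` with `s² = -q`.  Let `T : (ZMod p)⁶ → K⁴` be the
`𝔽_p`-linear map sending the `i`-th standard basis vector `eᵢ` to `uᵢ`, where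
`u₁ = (0,0,0,1)`, `u₂ = (1,0,0,0)`, `u₃ = (1,1,1,1)`,
`u₄ = (1, (1+s)/2, (1-s)/2, (1+q)/4)`, `u₅ = (1,0,0,0)`, `u₆ = (1, a·s/q, -a·s/q, a²/q)`.
Then `dim_{𝔽_p} ker T = 2`. -/
theorem kernel_chernClassMap_dim_two (p : ℕ) [Fact p.Prime] (hpodd : Odd p)
    (K : Type*) [Field K] [CharP K p] [Algebra (ZMod p) K]
    (q a : ℤ) (hq : ¬ (p : ℤ) ∣ q) (s : K) (hs : s ^ 2 = -(q : K))
    (T : (Fin 6 → ZMod p) →ₗ[ZMod p] (Fin 4 → K))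
    (hT : ∀ n : Fin 6, T (Pi.single n 1) =
      ![![0, 0, 0, 1], ![1, 0, 0, 0], ![1, 1, 1, 1],
        ![1, (1 + s) / 2, (1 - s) / 2, (1 + (q : K)) / 4],
        ![1, 0, 0, 0],
        ![1, (a : K) * s / (q : K), -((a : K) * s / (q : K)), (a : K) ^ 2 / (q : K)]] n) :
    Module.finrank (ZMod p) (LinearMap.ker T) = 2 := by
  have hp := Fact.out (p := p.Prime)
  have hp2 : p ≠ 2 := by rintro rfl; exact (by norm_num : ¬ Odd 2) hpodd
  have hinj : Function.Injective (algebraMap (ZMod p) K) := (algebraMap (ZMod p) K).injective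
  -- basic nonvanishing facts
  have hqZ : (q : ZMod p) ≠ 0 := by
    rw [Ne, ZMod.intCast_zmod_eq_zero_iff_dvd]
    exact_mod_cast hq
  have h2Z : (2 : ZMod p) ≠ 0 := by
    have : ((2 : ℕ) : ZMod p) ≠ 0 := by
      rw [Ne, ZMod.natCast_eq_zero_iff]
      exact fun h => hp2 ((Nat.prime_dvd_prime_iff_eq hp Nat.prime_two).mp h)
    simpa using this
  have hqK : ((q : ℤ) : K) ≠ 0 := by
    have := hinj.ne_iff' (map_zero _) |>.mpr hqZ
    simpa [map_intCast] using this
  have h2K : (2 : K) ≠ 0 := by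
    have := hinj.ne_iff' (map_zero _) |>.mpr h2Z
    simpa [map_ofNat] using this
  have h4K : (4 : K) ≠ 0 := by
    rw [show (4:K) = 2 * 2 by norm_num]
    exact mul_ne_zero h2K h2K
  have hsK : s ≠ 0 := by
    intro h
    exact hqK (neg_eq_zero.mp (by rw [← hs, h]; ring))
  have hTy : ∀ y : Fin 6 → ZMod p, T y = ∑ i : Fin 6, y i • T (Pi.single i 1) := by
    intro y
    have hy : y = ∑ i : Fin 6, y i • (Pi.single i 1 : Fin 6 → ZMod p) := by
      funext j
      rw [Finset.sum_apply]
      simp [Pi.single_apply]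
    conv_lhs => rw [hy]
    simp [map_sum, map_smul]
  have hAq : algebraMap (ZMod p) K ((q : ZMod p)) = (q : K) := by simp [map_intCast]
  have hAa : algebraMap (ZMod p) K ((a : ZMod p)) = (a : K) := by simp [map_intCast]
  have hA2 : algebraMap (ZMod p) K 2 = 2 := by
    rw [show ((2:ZMod p)) = ((2:ℤ):ZMod p) by norm_cast, map_intCast]; norm_num
  set u : Fin 6 → ZMod p := ![0, -1, 0, 0, 1, 0] with hu
  set w : Fin 6 → ZMod p :=
    ![(a:ZMod p)*(((q:ZMod p)-1)/2 - (a:ZMod p))/(q:ZMod p), (a:ZMod p)/(q:ZMod p) - 1,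
      (a:ZMod p)/(q:ZMod p), -2*(a:ZMod p)/(q:ZMod p), 0, 1] with hw
  have h0 : T (Pi.single 0 1) = ![0, 0, 0, 1] := hT 0
  have h1 : T (Pi.single 1 1) = ![1, 0, 0, 0] := hT 1
  have h2 : T (Pi.single 2 1) = ![1, 1, 1, 1] := hT 2
  have h3 : T (Pi.single 3 1) = ![1, (1 + s) / 2, (1 - s) / 2, (1 + (q : K)) / 4] := hT 3
  have h4 : T (Pi.single 4 1) = ![1, 0, 0, 0] := hT 4
  have h5 : T (Pi.single 5 1) = ![1, (a : K) * s / (q : K), -((a : K) * s / (q : K)),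
      (a : K) ^ 2 / (q : K)] := hT 5
  have hTy' : ∀ y : Fin 6 → ZMod p, T y =
      y 0 • ![0, 0, 0, 1] + y 1 • ![1, 0, 0, 0] + y 2 • ![1, 1, 1, 1]
      + y 3 • ![1, (1 + s) / 2, (1 - s) / 2, (1 + (q : K)) / 4] + y 4 • ![1, 0, 0, 0]
      + y 5 • ![1, (a : K) * s / (q : K), -((a : K) * s / (q : K)), (a : K) ^ 2 / (q : K)] := by
    intro y
    rw [hTy, Fin.sum_univ_six, h0, h1, h2, h3, h4, h5]
  have huval : u 0 = 0 ∧ u 1 = -1 ∧ u 2 = 0 ∧ u 3 = 0 ∧ u 4 = 1 ∧ u 5 = 0 :=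
    ⟨rfl, rfl, rfl, rfl, rfl, rfl⟩
  have hwval : w 0 = (a:ZMod p)*(((q:ZMod p)-1)/2 - (a:ZMod p))/(q:ZMod p)
      ∧ w 1 = (a:ZMod p)/(q:ZMod p) - 1 ∧ w 2 = (a:ZMod p)/(q:ZMod p)
      ∧ w 3 = -2*(a:ZMod p)/(q:ZMod p) ∧ w 4 = 0 ∧ w 5 = 1 :=
    ⟨rfl, rfl, rfl, rfl, rfl, rfl⟩
  obtain ⟨hu0, hu1, hu2, hu3, hu4, hu5⟩ := huval
  obtain ⟨hw0, hw1, hw2, hw3, hw4, hw5⟩ := hwval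
  have ext4 : ∀ v : Fin 4 → K, v 0 = 0 → v 1 = 0 → v 2 = 0 → v 3 = 0 → v = 0 := by
    intro v e0 e1 e2 e3
    funext j
    fin_cases j
    · exact e0
    · exact e1
    · exact e2
    · exact e3
  have hTu : T u = 0 := by
    apply ext4 <;>
    · rw [hTy', hu0, hu1, hu2, hu3, hu4, hu5]
      simp only [Pi.add_apply, Pi.smul_apply, Matrix.cons_val_zero, Matrix.cons_val_one,
        Matrix.cons_val_two, Matrix.cons_val_three, Matrix.head_cons, Matrix.vecHead,
        Matrix.vecTail, Function.comp_apply]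
      simp [Algebra.smul_def]
  have hTw : T w = 0 := by
    apply ext4 <;>
    · rw [hTy', hw0, hw1, hw2, hw3, hw4, hw5]
      simp only [Pi.add_apply, Pi.smul_apply, Matrix.cons_val_zero, Matrix.cons_val_one,
        Matrix.cons_val_two, Matrix.cons_val_three, Matrix.head_cons, Matrix.vecHead,
        Matrix.vecTail, Function.comp_apply, Matrix.cons_val_succ]
      simp only [Algebra.smul_def, map_div₀, map_mul, map_sub, map_neg, map_one, map_ofNat,
        map_zero, hAq, hAa, hA2]
      field_simp
      try ring
  have hli : LinearIndependent (ZMod p) ![u, w] := by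
    rw [LinearIndependent.pair_iff]
    intro c d hcd
    have g4 := congrFun hcd 4
    have g5 := congrFun hcd 5
    simp only [Pi.add_apply, Pi.smul_apply, Pi.zero_apply, smul_eq_mul, hu4, hw4, hu5, hw5,
      mul_one, mul_zero, add_zero, zero_add] at g4 g5
    exact ⟨g4, g5⟩
  have ext6 : ∀ v v' : Fin 6 → ZMod p, v 0 = v' 0 → v 1 = v' 1 → v 2 = v' 2 → v 3 = v' 3 →
      v 4 = v' 4 → v 5 = v' 5 → v = v' := by
    intro v v' e0 e1 e2 e3 e4 e5
    funext j
    fin_cases j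
    · exact e0
    · exact e1
    · exact e2
    · exact e3
    · exact e4
    · exact e5
  have hspan : LinearMap.ker T = Submodule.span (ZMod p) (Set.range ![u, w]) := by
    apply le_antisymm
    · intro x hx
      rw [LinearMap.mem_ker] at hx
      have hsum := hTy' x
      rw [hx] at hsum
      have e0 := congrFun hsum.symm 0
      have e1 := congrFun hsum.symm 1
      have e2 := congrFun hsum.symm 2
      have e3 := congrFun hsum.symm 3
      simp only [Pi.add_apply, Pi.smul_apply, Pi.zero_apply, Matrix.cons_val_zero,
        Matrix.cons_val_one, Matrix.cons_val_two, Matrix.cons_val_three, Matrix.head_cons,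
        Matrix.vecHead, Matrix.vecTail, Function.comp_apply, Matrix.cons_val_succ] at e0 e1 e2 e3
      simp only [Algebra.smul_def, map_div₀, map_mul, map_sub, map_neg, map_one, map_ofNat,
        map_zero, hAq, hAa, hA2, mul_zero, mul_one, zero_add, add_zero] at e0 e1 e2 e3
      field_simp at e1 e2 e3
      -- K-level consequences
      have t1 : (q:K) * algebraMap (ZMod p) K (x 3) + 2*(a:K)*algebraMap (ZMod p) K (x 5) = 0 := by
        have h := mul_eq_zero.mp (show (s*2) * ((q:K) * algebraMap (ZMod p) K (x 3)
            + 2*(a:K)*algebraMap (ZMod p) K (x 5)) = 0 by linear_combination e1 - e2)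
        exact h.resolve_left (mul_ne_zero hsK h2K)
      have t2 : 2 * algebraMap (ZMod p) K (x 2) + algebraMap (ZMod p) K (x 3) = 0 := by
        have h := mul_eq_zero.mp (show ((q:K)*2) * (2 * algebraMap (ZMod p) K (x 2)
            + algebraMap (ZMod p) K (x 3)) = 0 by linear_combination e1 + e2)
        exact h.resolve_left (mul_ne_zero hqK h2K)
      have t3 : algebraMap (ZMod p) K (x 2) * (q:K) - (a:K) * algebraMap (ZMod p) K (x 5) = 0 := by
        have h := mul_eq_zero.mp (show (2:K) * (algebraMap (ZMod p) K (x 2) * (q:K)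
            - (a:K) * algebraMap (ZMod p) K (x 5)) = 0 by linear_combination (q:K) * t2 - t1)
        exact h.resolve_left h2K
      -- ZMod p coordinate identities
      have hx3 : x 3 = -2*(a:ZMod p)/(q:ZMod p) * x 5 := by
        apply hinj
        simp only [map_mul, map_div₀, map_neg, map_ofNat, hAq, hAa, hA2]
        field_simp
        linear_combination t1
      have hx2 : x 2 = (a:ZMod p)/(q:ZMod p) * x 5 := by
        apply hinj
        simp only [map_mul, map_div₀, hAq, hAa]
        field_simp
        linear_combination t3
      have hx0 : x 0 = (a:ZMod p)*(((q:ZMod p)-1)/2 - (a:ZMod p))/(q:ZMod p) * x 5 := by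
        apply hinj
        simp only [map_mul, map_div₀, map_sub, map_one, map_ofNat, hAq, hAa, hA2]
        apply mul_left_cancel₀ h2K
        field_simp
        apply mul_left_cancel₀ h2K; linear_combination e3 - (4:K)*t3 - (1+(q:K))*t1
      have hx1 : x 1 = ((a:ZMod p)/(q:ZMod p) - 1) * x 5 - x 4 := by
        apply hinj
        simp only [map_mul, map_div₀, map_sub, map_one, hAq, hAa]
        field_simp
        linear_combination (q:K)*e0 - t3 - t1
      have hxrep : x = x 4 • u + x 5 • w := by
        apply ext6 <;>
          simp only [Pi.add_apply, Pi.smul_apply, smul_eq_mul, hu0, hu1, hu2, hu3, hu4, hu5,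
            hw0, hw1, hw2, hw3, hw4, hw5]
        · rw [hx0]; ring
        · rw [hx1]; ring
        · rw [hx2]; ring
        · rw [hx3]; ring
        · ring
        · ring
      rw [hxrep]
      exact Submodule.add_mem _
        (Submodule.smul_mem _ _ (Submodule.subset_span ⟨0, rfl⟩))
        (Submodule.smul_mem _ _ (Submodule.subset_span ⟨1, rfl⟩))
    · rw [Submodule.span_le]
      rintro y ⟨i, rfl⟩
      fin_cases i
      · exact LinearMap.mem_ker.mpr hTu
      · exact LinearMap.mem_ker.mpr hTw
  rw [hspan, finrank_span_eq_card hli]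
  simp
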